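/- Let $r \geq 3$ be odd, $q = e^{2\pi i/r}$, and let $n_r = (r-1)/2$ if $r \equiv 1 \pmod 4$ and $n_r = (r-3)/2$ if $r \equiv 3 \pmod 4$. Let $m \in I_r$ be such that the 6-tuple $(n_r, m, m, n_r, m, m)$ is $r$-admissible. Then the sign of the (real-valued) quantum 6j-symbol $\left|\begin{smallmatrix} n_r & m & m \\ n_r & m & m \end{smallmatrix}\right|$ is independent of $m$; moreover, it is positive when $r \equiv 3 \pmod 4$ and negative when $r \equiv 1 \pmod 4$. -/
import Mathlib


open scoped Real
open Complex Finset

noncomputable section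

/-- The quantum integer `[n]` at `q = exp(2πi/r)`. -/
def qint (r : ℕ) (n : ℤ) : ℂ :=
  (Complex.exp (2 * Real.pi * Complex.I / r) ^ n -
    Complex.exp (2 * Real.pi * Complex.I / r) ^ (-n)) /
  (Complex.exp (2 * Real.pi * Complex.I / r) -
    (Complex.exp (2 * Real.pi * Complex.I / r))⁻¹)

/-- The quantum factorial `[N]! = ∏_{k=1}^N [k]`, with `[0]! = 1`. -/
def qfact (r N : ℕ) : ℂ := ∏ k ∈ Finset.Icc 1 N, qint r (k : ℤ)

/-- A triple `(a₁,a₂,a₃)` of elements of `I_r = {0,…,r-2}` is `r`-admissible. -/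
def AdmissibleTriple (r a₁ a₂ a₃ : ℕ) : Prop :=
  a₁ ≤ r - 2 ∧ a₂ ≤ r - 2 ∧ a₃ ≤ r - 2 ∧
  Even (a₁ + a₂ + a₃) ∧
  a₁ + a₂ + a₃ ≤ 2 * (r - 2) ∧
  a₃ ≤ a₁ + a₂ ∧ a₂ ≤ a₁ + a₃ ∧ a₁ ≤ a₂ + a₃

/-- A 6-tuple `(a₁,…,a₆)` is `r`-admissible. -/
def Admissible6 (r a₁ a₂ a₃ a₄ a₅ a₆ : ℕ) : Prop :=
  AdmissibleTriple r a₁ a₂ a₃ ∧ AdmissibleTriple r a₁ a₅ a₆ ∧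
  AdmissibleTriple r a₂ a₄ a₆ ∧ AdmissibleTriple r a₃ a₄ a₅

/-- `Δ(a₁,a₂,a₃)`, using the principal complex square root, which realizes the
convention `√y = i√|y|` for negative real `y`. -/
def qdelta (r a₁ a₂ a₃ : ℕ) : ℂ :=
  (qfact r ((a₁ + a₂ - a₃) / 2) * qfact r ((a₁ + a₃ - a₂) / 2) *
      qfact r ((a₂ + a₃ - a₁) / 2) / qfact r ((a₁ + a₂ + a₃) / 2 + 1)) ^ (1 / 2 : ℂ)

/-- The quantum 6j-symbol `|a₁ a₂ a₃; a₄ a₅ a₆|` at `q = exp(2πi/r)`. -/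
def sixj (r a₁ a₂ a₃ a₄ a₅ a₆ : ℕ) : ℂ :=
  Complex.I ^ (-(a₁ + a₂ + a₃ + a₄ + a₅ + a₆ : ℤ)) *
    qdelta r a₁ a₂ a₃ * qdelta r a₁ a₅ a₆ * qdelta r a₂ a₄ a₆ * qdelta r a₃ a₄ a₅ *
    ∑ k ∈ Finset.Icc
        (max (max ((a₁ + a₂ + a₃) / 2) ((a₁ + a₅ + a₆) / 2))
             (max ((a₂ + a₄ + a₆) / 2) ((a₃ + a₄ + a₅) / 2)))
        (min ((a₁ + a₂ + a₄ + a₅) / 2)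
             (min ((a₁ + a₃ + a₄ + a₆) / 2) ((a₂ + a₃ + a₅ + a₆) / 2))),
      ((-1 : ℂ) ^ k * qfact r (k + 1)) /
        (qfact r (k - (a₁ + a₂ + a₃) / 2) * qfact r (k - (a₁ + a₅ + a₆) / 2) *
         qfact r (k - (a₂ + a₄ + a₆) / 2) * qfact r (k - (a₃ + a₄ + a₅) / 2) *
         qfact r ((a₁ + a₂ + a₄ + a₅) / 2 - k) * qfact r ((a₁ + a₃ + a₄ + a₆) / 2 - k) *
         qfact r ((a₂ + a₃ + a₅ + a₆) / 2 - k))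

/-- `n_r = (r-1)/2` if `r ≡ 1 mod 4`, and `n_r = (r-3)/2` if `r ≡ 3 mod 4`. -/
def nr (r : ℕ) : ℕ := if r % 4 = 1 then (r - 1) / 2 else (r - 3) / 2

def qintR (r : ℕ) (n : ℤ) : ℝ := Real.sin (2 * Real.pi * n / r) / Real.sin (2 * Real.pi / r)

lemma exp_zpow (r : ℕ) (n : ℤ) :
    Complex.exp (2 * Real.pi * Complex.I / r) ^ n
      = Complex.exp (((2 * Real.pi * n / r : ℝ) : ℂ) * Complex.I) := by
  rw [← Complex.exp_int_mul]
  congr 1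
  push_cast
  ring

lemma exp_sub_exp_neg (x : ℝ) :
    Complex.exp ((x:ℂ) * Complex.I) - Complex.exp (((-x : ℝ):ℂ) * Complex.I)
      = 2 * Complex.I * Real.sin x := by
  rw [Complex.exp_mul_I, Complex.exp_mul_I]
  push_cast
  rw [Complex.cos_neg, Complex.sin_neg]
  ring

lemma qint_eq (r : ℕ) (n : ℤ) : qint r n = ((qintR r n : ℝ) : ℂ) := by
  have hnum : Complex.exp (2 * Real.pi * Complex.I / r) ^ n -
      Complex.exp (2 * Real.pi * Complex.I / r) ^ (-n)
      = 2 * Complex.I * Real.sin (2 * Real.pi * n / r) := by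
    rw [exp_zpow r n, exp_zpow r (-n)]
    rw [show (2 * Real.pi * ((-n : ℤ) : ℝ) / r) = -(2 * Real.pi * (n : ℤ) / r) by
      push_cast; ring]
    exact exp_sub_exp_neg _
  have hden : Complex.exp (2 * Real.pi * Complex.I / r) -
      (Complex.exp (2 * Real.pi * Complex.I / r))⁻¹
      = 2 * Complex.I * Real.sin (2 * Real.pi / r) := by
    have h3 := exp_zpow r 1
    have h4 := exp_zpow r (-1)
    rw [zpow_one] at h3
    rw [zpow_neg, zpow_one] at h4
    rw [h3]
    nth_rewrite 1 [h3] at h4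
    rw [h4]
    rw [show (2 * Real.pi * ((-1 : ℤ) : ℝ) / r) = -(2 * Real.pi * ((1:ℤ):ℝ) / r) by
      push_cast; ring]
    have := exp_sub_exp_neg (2 * Real.pi * ((1:ℤ):ℝ) / r)
    push_cast at this ⊢
    convert this using 3 <;> push_cast <;> ring
  rw [qint, hnum, hden, qintR, Complex.ofReal_div]
  exact mul_div_mul_left _ _ (by simp [Complex.I_ne_zero])

def qfactR (r N : ℕ) : ℝ := ∏ k ∈ Finset.Icc 1 N, qintR r (k : ℤ)

lemma sin_base_pos {r : ℕ} (hr : 3 ≤ r) : 0 < Real.sin (2 * Real.pi / r) := by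
  have hπ := Real.pi_pos
  have h3 : (3:ℝ) ≤ r := by exact_mod_cast hr
  apply Real.sin_pos_of_pos_of_lt_pi
  · positivity
  · rw [div_lt_iff₀ (by positivity)]
    nlinarith [mul_lt_mul_of_pos_left (show (2:ℝ) < r by linarith) hπ]

lemma qintR_pos {r k : ℕ} (hr : 3 ≤ r) (h1 : 1 ≤ k) (h2 : 2 * k < r) :
    0 < qintR r k := by
  have hπ := Real.pi_pos
  have hrp : (0:ℝ) < r := by positivity
  have hk : (1:ℝ) ≤ k := by exact_mod_cast h1
  have hk2 : 2 * (k:ℝ) < r := by exact_mod_cast h2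
  rw [qintR]
  push_cast
  apply div_pos _ (sin_base_pos hr)
  apply Real.sin_pos_of_pos_of_lt_pi
  · positivity
  · rw [div_lt_iff₀ hrp]
    nlinarith [mul_lt_mul_of_pos_left hk2 hπ]

lemma qintR_neg {r k : ℕ} (hr : 3 ≤ r) (h1 : r < 2 * k) (h2 : k < r) :
    qintR r k < 0 := by
  have hπ := Real.pi_pos
  have hrp : (0:ℝ) < r := by positivity
  have hk2 : (r:ℝ) < 2 * k := by exact_mod_cast h1
  have hk3 : (k:ℝ) < r := by exact_mod_cast h2
  rw [qintR]
  push_cast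
  apply div_neg_of_neg_of_pos _ (sin_base_pos hr)
  have h : 0 < Real.sin (2 * Real.pi * k / r - Real.pi) := by
    apply Real.sin_pos_of_pos_of_lt_pi
    · rw [sub_pos, lt_div_iff₀ hrp]
      nlinarith [mul_lt_mul_of_pos_left hk2 hπ]
    · rw [sub_lt_iff_lt_add, div_lt_iff₀ hrp]
      nlinarith [mul_lt_mul_of_pos_left hk3 hπ]
  rw [Real.sin_sub_pi] at h
  linarith

lemma qintR_r_self {r : ℕ} (hr : 3 ≤ r) : qintR r r = 0 := by
  have hrp : (r:ℝ) ≠ 0 := by positivity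
  rw [qintR]
  push_cast
  rw [show 2 * Real.pi * (r:ℝ) / (r:ℝ) = 2 * Real.pi by field_simp]
  simp [Real.sin_two_pi]

lemma qfactR_pos {r N : ℕ} (hr : 3 ≤ r) (h : 2 * N < r) : 0 < qfactR r N := by
  apply Finset.prod_pos
  intro k hk
  simp only [Finset.mem_Icc] at hk
  exact qintR_pos hr hk.1 (by omega)

lemma qfactR_zero {r N : ℕ} (hr : 3 ≤ r) (h : r ≤ N) : qfactR r N = 0 :=
  Finset.prod_eq_zero (Finset.mem_Icc.mpr ⟨by omega, h⟩) (qintR_r_self hr)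

lemma qfactR_sign {r : ℕ} (hr : 3 ≤ r) (hodd : Odd r) :
    ∀ d, (r-1)/2 + d ≤ r - 1 → 0 < (-1:ℝ)^d * qfactR r ((r-1)/2 + d) := by
  have hmod : r % 2 = 1 := Nat.odd_iff.mp hodd
  intro d
  induction d with
  | zero => intro _; simpa using qfactR_pos hr (by omega)
  | succ d ih =>
    intro hd
    have h1 : (1:ℕ) ≤ (r-1)/2 + d + 1 := by omega
    rw [show (r-1)/2 + (d+1) = ((r-1)/2 + d) + 1 by omega, qfactR,
      Finset.prod_Icc_succ_top h1]
    have hneg : qintR r (((r-1)/2 + d + 1 : ℕ) : ℤ) < 0 :=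
      qintR_neg hr (by omega) (by omega)
    have hih := ih (by omega)
    rw [qfactR] at hih
    rw [pow_succ]
    nlinarith

lemma qfact_eq (r N : ℕ) : qfact r N = ((qfactR r N : ℝ) : ℂ) := by
  simp [qfact, qfactR, qint_eq]

lemma cpow_half_sq (x : ℂ) : x ^ (1/2 : ℂ) * x ^ (1/2 : ℂ) = x := by
  rcases eq_or_ne x 0 with h | h
  · rw [h, Complex.zero_cpow (by norm_num), mul_zero]
  · rw [← Complex.cpow_add _ _ h]
    norm_num

lemma I_zpow_four_mul (s : ℤ) : Complex.I ^ (4 * s) = 1 := by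
  rw [zpow_mul]
  norm_num [show Complex.I ^ (4:ℤ) = 1 by rw [show (4:ℤ) = (4:ℕ) from rfl, zpow_natCast, Complex.I_pow_four]]

theorem sign_sixj_nr_m (r : ℕ) (hr : 3 ≤ r) (hodd : Odd r) (m : ℕ)
    (hadm : Admissible6 r (nr r) m m (nr r) m m) :
    (sixj r (nr r) m m (nr r) m m).im = 0 ∧
    (r % 4 = 3 → 0 < (sixj r (nr r) m m (nr r) m m).re) ∧
    (r % 4 = 1 → (sixj r (nr r) m m (nr r) m m).re < 0) := by
  have hmod : r % 2 = 1 := Nat.odd_iff.mp hodd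
  set n := nr r with hnr
  have hn : (r % 4 = 1 ∧ 2 * n = r - 1) ∨ (r % 4 = 3 ∧ 2 * n = r - 3) := by
    rw [hnr, nr]
    split_ifs with h
    · left; exact ⟨h, by omega⟩
    · right; exact ⟨by omega, by omega⟩
  set c := n / 2 with hcdef
  have hc : n = 2 * c := by omega
  obtain ⟨⟨hn2, hm2, -, -, hsum, -, -, hn2m⟩, -, -, -⟩ := hadm
  -- nat-div simplifications
  have e1 : (n + m + m) / 2 = c + m := by omega
  have e2 : (m + n + m) / 2 = c + m := by omega
  have e3 : (n + m + n + m) / 2 = n + m := by omega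
  have e4 : (m + m + m + m) / 2 = 2 * m := by omega
  have e5 : (n + m - m) / 2 = c := by omega
  have e6 : (m + m - n) / 2 = m - c := by omega
  have e7 : (m + n - m) / 2 = c := by omega
  -- the common qdelta
  have hd2 : qdelta r m n m = qdelta r n m m := by
    rw [qdelta, qdelta, e5, e6, e7, show (m + n + m) / 2 + 1 = (n + m + m) / 2 + 1 by omega]
    ring_nf
  have hdval : qdelta r n m m =
      ((qfactR r c * qfactR r c * qfactR r (m - c) / qfactR r (c + m + 1) : ℝ) : ℂ)
        ^ (1/2 : ℂ) := by
    rw [qdelta, e5, e6, show (n+m+m)/2 + 1 = c + m + 1 by omega]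
    push_cast [qfact_eq]
    ring_nf
  set y : ℝ := qfactR r c * qfactR r c * qfactR r (m - c) / qfactR r (c + m + 1) with hydef
  set SR : ℝ := ∑ k ∈ Finset.Icc (c + m) (min (n + m) (2 * m)),
      ((-1 : ℝ) ^ k * qfactR r (k + 1)) /
        (qfactR r (k - (c + m)) * qfactR r (k - (c + m)) *
         qfactR r (k - (c + m)) * qfactR r (k - (c + m)) *
         qfactR r (n + m - k) * qfactR r (n + m - k) *
         qfactR r (2 * m - k)) with hSRdef
  have hsixj : sixj r n m m n m m = ((y * y * SR : ℝ) : ℂ) := by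
    rw [sixj]
    rw [show -((n:ℤ) + m + m + n + m + m) = 4 * (-((c:ℤ) + m)) by push_cast; omega]
    rw [I_zpow_four_mul, hd2, hdval]
    simp only [e1, e2, e3, e4, max_self,
      show min (n + m) (min (n + m) (2 * m)) = min (n + m) (2 * m) by omega]
    have hsum_eq : (∑ k ∈ Finset.Icc (c + m) (min (n + m) (2 * m)),
        ((-1 : ℂ) ^ k * qfact r (k + 1)) /
        (qfact r (k - (c + m)) * qfact r (k - (c + m)) *
         qfact r (k - (c + m)) * qfact r (k - (c + m)) *
         qfact r (n + m - k) * qfact r (n + m - k) *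
         qfact r (2 * m - k))) = ((SR : ℝ) : ℂ) := by
      rw [hSRdef]
      push_cast [qfact_eq]
      exact Finset.sum_congr rfl fun k hk => by ring
    rw [hsum_eq]
    set Y : ℂ := ((y : ℝ) : ℂ) ^ (1/2 : ℂ) with hYdef
    have hY : Y * Y = ((y : ℝ) : ℂ) := cpow_half_sq _
    push_cast
    rw [show (1:ℂ) * Y * Y * Y * Y * ((SR : ℝ) : ℂ) = (Y * Y) * (Y * Y) * ((SR:ℝ):ℂ) by ring,
      hY]
  -- now the sign analysis
  set h := (r - 1) / 2 with hhdef
  have hyden := qfactR_sign hr hodd (c + m + 1 - h) (by omega)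
  rw [show h + (c + m + 1 - h) = c + m + 1 by omega] at hyden
  have hydenne : qfactR r (c + m + 1) ≠ 0 := by
    intro h0
    rw [h0, mul_zero] at hyden
    exact lt_irrefl _ hyden
  have hynum : 0 < qfactR r c * qfactR r c * qfactR r (m - c) :=
    mul_pos (mul_pos (qfactR_pos hr (by omega)) (qfactR_pos hr (by omega)))
      (qfactR_pos hr (by omega))
  have hyne : y ≠ 0 := div_ne_zero (ne_of_gt hynum) hydenne
  have hy2 : 0 < y * y := mul_self_pos.mpr hyne
  have hterm : ∀ k ∈ Finset.Icc (c + m) (min (n + m) (2 * m)),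
      0 ≤ (-1:ℝ)^(h+1) * (((-1 : ℝ) ^ k * qfactR r (k + 1)) /
        (qfactR r (k - (c + m)) * qfactR r (k - (c + m)) *
         qfactR r (k - (c + m)) * qfactR r (k - (c + m)) *
         qfactR r (n + m - k) * qfactR r (n + m - k) *
         qfactR r (2 * m - k))) ∧
      (k + 1 ≤ r - 1 → 0 < (-1:ℝ)^(h+1) * (((-1 : ℝ) ^ k * qfactR r (k + 1)) /
        (qfactR r (k - (c + m)) * qfactR r (k - (c + m)) *
         qfactR r (k - (c + m)) * qfactR r (k - (c + m)) *
         qfactR r (n + m - k) * qfactR r (n + m - k) *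
         qfactR r (2 * m - k)))) := by
    intro k hk
    rw [Finset.mem_Icc] at hk
    obtain ⟨hk1, hk2⟩ := hk
    rw [le_min_iff] at hk2  -- maybe min form
    have p1 : 0 < qfactR r (k - (c + m)) := qfactR_pos hr (by omega)
    have p2 : 0 < qfactR r (n + m - k) := qfactR_pos hr (by omega)
    have p3 : 0 < qfactR r (2 * m - k) := qfactR_pos hr (by omega)
    have hD : 0 < qfactR r (k - (c + m)) * qfactR r (k - (c + m)) *
         qfactR r (k - (c + m)) * qfactR r (k - (c + m)) *
         qfactR r (n + m - k) * qfactR r (n + m - k) *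
         qfactR r (2 * m - k) := by positivity
    rcases le_or_gt (k + 1) (r - 1) with hkr | hkr
    · have hs := qfactR_sign hr hodd (k + 1 - h) (by omega)
      rw [show h + (k + 1 - h) = k + 1 by omega] at hs
      have hpow : (-1:ℝ)^(h+1) * (-1:ℝ)^k = (-1:ℝ)^(k+1-h) := by
        rw [← pow_add, show h+1+k = (k+1-h) + 2*h by omega, pow_add, pow_mul]
        norm_num
      have key : 0 < (-1:ℝ)^(h+1) * (((-1 : ℝ) ^ k * qfactR r (k + 1)) /
        (qfactR r (k - (c + m)) * qfactR r (k - (c + m)) *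
         qfactR r (k - (c + m)) * qfactR r (k - (c + m)) *
         qfactR r (n + m - k) * qfactR r (n + m - k) *
         qfactR r (2 * m - k))) := by
        rw [show (-1:ℝ)^(h+1) * (((-1 : ℝ) ^ k * qfactR r (k + 1)) /
          (qfactR r (k - (c + m)) * qfactR r (k - (c + m)) *
           qfactR r (k - (c + m)) * qfactR r (k - (c + m)) *
           qfactR r (n + m - k) * qfactR r (n + m - k) *
           qfactR r (2 * m - k))) = (((-1:ℝ)^(h+1) * (-1:ℝ)^k) * qfactR r (k + 1)) /
          (qfactR r (k - (c + m)) * qfactR r (k - (c + m)) *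
           qfactR r (k - (c + m)) * qfactR r (k - (c + m)) *
           qfactR r (n + m - k) * qfactR r (n + m - k) *
           qfactR r (2 * m - k)) by ring, hpow]
        exact div_pos hs hD
      exact ⟨le_of_lt key, fun _ => key⟩
    · have hz : qfactR r (k + 1) = 0 := qfactR_zero hr (by omega)
      rw [hz]
      constructor
      · simp
      · intro hcon; omega
  have hSsign : 0 < (-1:ℝ)^(h+1) * SR := by
    rw [hSRdef, Finset.mul_sum]
    apply Finset.sum_pos' (fun k hk => (hterm k hk).1)
    refine ⟨c + m, Finset.mem_Icc.mpr ⟨le_refl _, by omega⟩, ?_⟩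
    exact (hterm (c + m) (Finset.mem_Icc.mpr ⟨le_refl _, by omega⟩)).2 (by omega)
  refine ⟨by rw [hsixj]; exact Complex.ofReal_im _, ?_, ?_⟩
  · intro h4
    have hpar : (-1:ℝ)^(h+1) = 1 := by
      rw [show h + 1 = 2 * ((h+1)/2) by omega, pow_mul]
      norm_num
    rw [hpar, one_mul] at hSsign
    rw [hsixj, Complex.ofReal_re]
    exact mul_pos hy2 hSsign
  · intro h4
    have hpar : (-1:ℝ)^(h+1) = -1 := by
      rw [show h + 1 = 2 * (h/2) + 1 by omega, pow_succ, pow_mul]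
      norm_num
    rw [hpar] at hSsign
    rw [hsixj, Complex.ofReal_re]
    nlinarith
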